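/- Let A ∈ ℝ^{n×n}, B ∈ ℝ^{n×m}, U0 ∈ ℝ^{m×T}, X0, X1, D0 ∈ ℝ^{n×T}, Δ ∈ ℝ^{n×s}, and Ω ∈ ℝ^{n×n} with Ω ≻ 0. Suppose: (i) X1 = A·X0 + B·U0 + D0 and D0·D0ᵀ ⪯ Δ·Δᵀ; (ii) there exist ε > 0 and Y ∈ ℝ^{T×n} such that the block matrix [[X1·Y + (X1·Y)ᵀ + Ω + ε·Δ·Δᵀ, Yᵀ],[Y, −ε·I_T]] is negative definite and X0·Y is symmetric positive definite. Let K := U0·Y·(X0·Y)⁻¹. Then there exist c₁ ≥ 1, c₂ > 0 and c₃ > 0 such that for every bounded continuous d : [0,∞) → ℝⁿ and every differentiable x : [0,∞) → ℝⁿ with x′(t) = (A+B·K)·x(t) + d(t) for all t ≥ 0, one has ‖x(t)‖ ≤ c₁·e^{−c₂·t}·‖x(0)‖ + c₃·sup_{s∈[0,t]}‖d(s)‖ for all t ≥ 0. -/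

import Mathlib

open Matrix Set

local notation "⟪" x ", " y "⟫" => @inner ℝ _ _ x y

lemma quad_transpose {n : ℕ} (N : Matrix (Fin n) (Fin n) ℝ) (v : Fin n → ℝ) :
    v ⬝ᵥ (Nᵀ *ᵥ v) = v ⬝ᵥ (N *ᵥ v) := by
  rw [mulVec_transpose, dotProduct_mulVec, dotProduct_comm]

lemma sqrt_add_le' {a b : ℝ} (ha : 0 ≤ a) (hb : 0 ≤ b) :
    Real.sqrt (a + b) ≤ Real.sqrt a + Real.sqrt b := by
  rw [← Real.sqrt_sq (add_nonneg (Real.sqrt_nonneg a) (Real.sqrt_nonneg b))]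
  apply Real.sqrt_le_sqrt
  nlinarith [Real.sq_sqrt ha, Real.sq_sqrt hb, Real.sqrt_nonneg a, Real.sqrt_nonneg b]

lemma congr_posdef {n : ℕ} {P N : Matrix (Fin n) (Fin n) ℝ}
    (hP : P.PosDef) (hN : N.PosDef) : (P * N * P).PosDef := by
  have hPt : Pᵀ = P := hP.1
  have hNt : Nᵀ = N := hN.1
  have hdet : IsUnit P.det := hP.det_pos.ne'.isUnit
  refine Matrix.PosDef.of_dotProduct_mulVec_pos ?_ ?_
  · show (P * N * P)ᴴ = P * N * P
    rw [show ∀ (M : Matrix (Fin n) (Fin n) ℝ), Mᴴ = Mᵀ from fun _ => rfl,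
      transpose_mul, transpose_mul, hPt, hNt, ← Matrix.mul_assoc]
  · intro v hv
    have hPv : P *ᵥ v ≠ 0 := by
      intro h
      apply hv
      have hinv : P⁻¹ *ᵥ (P *ᵥ v) = v := by
        rw [mulVec_mulVec, nonsing_inv_mul _ hdet, one_mulVec]
      rw [h, mulVec_zero] at hinv
      exact hinv.symm
    have key : v ⬝ᵥ ((P * N * P) *ᵥ v) = (P *ᵥ v) ⬝ᵥ (N *ᵥ (P *ᵥ v)) := by
      rw [← mulVec_mulVec, ← mulVec_mulVec, dotProduct_mulVec, ← mulVec_transpose, hPt]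
    rw [star_trivial, key]
    have := hN.dotProduct_mulVec_pos hPv
    rwa [star_trivial] at this

lemma quad_lower {n : ℕ} (hn : 0 < n) (N : Matrix (Fin n) (Fin n) ℝ) (hN : N.PosDef) :
    ∃ α > 0, ∀ v : EuclideanSpace ℝ (Fin n), α * ‖v‖ ^ 2 ≤ v ⬝ᵥ (N *ᵥ v) := by
  have hnt : Nontrivial (EuclideanSpace ℝ (Fin n)) := by
    refine ⟨EuclideanSpace.single ⟨0, hn⟩ 1, 0, ?_⟩
    intro h
    have := congrFun (congrArg (fun z : EuclideanSpace ℝ (Fin n) => (z : Fin n → ℝ)) h) ⟨0, hn⟩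
    simp [EuclideanSpace.single] at this
  have hsph : (Metric.sphere (0 : EuclideanSpace ℝ (Fin n)) 1).Nonempty :=
    NormedSpace.sphere_nonempty.mpr zero_le_one
  have hcont : Continuous (fun v : EuclideanSpace ℝ (Fin n) => v ⬝ᵥ (N *ᵥ v)) := by
    have : (fun v : EuclideanSpace ℝ (Fin n) => v ⬝ᵥ (N *ᵥ v))
        = fun v : EuclideanSpace ℝ (Fin n) => ⟪v, (Matrix.toEuclideanCLM (𝕜 := ℝ) N) v⟫ := by
      funext v
      simp [PiLp.inner_apply, dotProduct, mul_comm]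
    rw [this]
    exact continuous_id.inner (Matrix.toEuclideanCLM (𝕜 := ℝ) N).continuous
  obtain ⟨u, hu, humin⟩ := (isCompact_sphere (0 : EuclideanSpace ℝ (Fin n)) 1).exists_isMinOn
    hsph hcont.continuousOn
  have hunorm : ‖u‖ = 1 := by simpa using hu
  have hune : u ≠ 0 := by intro h; rw [h] at hunorm; simp at hunorm
  refine ⟨u ⬝ᵥ (N *ᵥ u), by simpa [star_trivial] using hN.dotProduct_mulVec_pos (x := u.ofLp) (by simpa using hune), ?_⟩
  intro v
  rcases eq_or_ne v 0 with rfl | hv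
  · simp
  · have hvn : ‖v‖ ≠ 0 := norm_ne_zero_iff.mpr hv
    set c : ℝ := ‖v‖⁻¹
    have hc : c ≠ 0 := inv_ne_zero hvn
    have hmem : (c • v : EuclideanSpace ℝ (Fin n)) ∈ Metric.sphere (0 : EuclideanSpace ℝ (Fin n)) 1 := by
      simp [norm_smul, c, abs_of_nonneg (inv_nonneg.mpr (norm_nonneg v)), inv_mul_cancel₀ hvn]
    have h1 : u ⬝ᵥ (N *ᵥ u) ≤ ((c • v : EuclideanSpace ℝ (Fin n)) : Fin n → ℝ) ⬝ᵥ (N *ᵥ (c • v)) :=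
      humin hmem
    have hsc : ((c • v : EuclideanSpace ℝ (Fin n)) : Fin n → ℝ) ⬝ᵥ (N *ᵥ (c • v)) = c ^ 2 * (v ⬝ᵥ (N *ᵥ v)) := by
      have : ((c • v : EuclideanSpace ℝ (Fin n)) : Fin n → ℝ) = c • (v : Fin n → ℝ) := rfl
      rw [this, mulVec_smul, smul_dotProduct, dotProduct_smul]
      ring_nf
    rw [hsc] at h1
    have h2 : (u ⬝ᵥ (N *ᵥ u)) * ‖v‖ ^ 2 ≤ c ^ 2 * (v ⬝ᵥ (N *ᵥ v)) * ‖v‖ ^ 2 := by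
      nlinarith [sq_nonneg ‖v‖, norm_nonneg v]
    have hcs : c ^ 2 * ‖v‖ ^ 2 = 1 := by
      show ‖v‖⁻¹ ^ 2 * ‖v‖ ^ 2 = 1
      rw [inv_pow, inv_mul_cancel₀ (pow_ne_zero 2 hvn)]
    have h3 : v ⬝ᵥ (N *ᵥ v) * (c ^ 2 * ‖v‖ ^ 2) = v ⬝ᵥ (N *ᵥ v) * 1 := by rw [hcs]
    nlinarith [h3]

lemma step2 {n T s : ℕ} (X1 D0 : Matrix (Fin n) (Fin T) ℝ)
    (Δ : Matrix (Fin n) (Fin s) ℝ) (Ω : Matrix (Fin n) (Fin n) ℝ) (hΩ : Ω.PosDef)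
    (hD0 : (Δ * Δᵀ - D0 * D0ᵀ).PosSemidef)
    (ε : ℝ) (hε : 0 < ε) (Y : Matrix (Fin T) (Fin n) ℝ)
    (hLMI : (-(Matrix.fromBlocks
        (X1 * Y + (X1 * Y)ᵀ + Ω + ε • (Δ * Δᵀ)) Yᵀ Y
        (-(ε • (1 : Matrix (Fin T) (Fin T) ℝ))))).PosDef) :
    (-((X1 - D0) * Y + ((X1 - D0) * Y)ᵀ)).PosDef := by
  refine Matrix.PosDef.of_dotProduct_mulVec_pos ?_ ?_
  · have : ((X1 - D0) * Y + ((X1 - D0) * Y)ᵀ)ᴴ = (X1 - D0) * Y + ((X1 - D0) * Y)ᵀ := by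
      rw [conjTranspose_add, show ∀ M : Matrix (Fin n) (Fin n) ℝ, Mᴴ = Mᵀ from fun M => rfl,
        show ∀ M : Matrix (Fin n) (Fin n) ℝ, Mᴴ = Mᵀ from fun M => rfl,
        transpose_transpose, add_comm]
    rw [IsHermitian, conjTranspose_neg, this]
  · intro v hv
    set b : Fin T → ℝ := D0ᵀ *ᵥ v with hb
    set z : (Fin n ⊕ Fin T) → ℝ := Sum.elim v (-b) with hzdef
    have hz : z ≠ 0 := by
      intro h
      apply hv
      funext i
      exact congrFun h (Sum.inl i)
    have h := hLMI.dotProduct_mulVec_pos hz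
    rw [star_trivial] at h
    rw [neg_mulVec, dotProduct_neg, hzdef, fromBlocks_mulVec, sumElim_dotProduct_sumElim] at h
    simp only [Sum.elim_comp_inl, Sum.elim_comp_inr, add_mulVec, dotProduct_add, mulVec_neg,
      neg_mulVec, dotProduct_neg, neg_dotProduct, smul_mulVec, one_mulVec, dotProduct_smul,
      neg_neg, smul_eq_mul] at h
    have hq1t : v ⬝ᵥ ((X1 * Y)ᵀ *ᵥ v) = v ⬝ᵥ ((X1 * Y) *ᵥ v) := quad_transpose _ v
    have hYb : v ⬝ᵥ (Yᵀ *ᵥ b) = b ⬝ᵥ (Y *ᵥ v) := by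
      rw [dotProduct_mulVec, vecMul_transpose, dotProduct_comm]
    have hq2 : v ⬝ᵥ ((D0 * Y) *ᵥ v) = b ⬝ᵥ (Y *ᵥ v) := by
      rw [← mulVec_mulVec, dotProduct_mulVec, hb, mulVec_transpose]
    have hbb : v ⬝ᵥ ((D0 * D0ᵀ) *ᵥ v) = b ⬝ᵥ b := by
      rw [← mulVec_mulVec, dotProduct_mulVec, ← mulVec_transpose, hb]
    have hΔv : 0 ≤ v ⬝ᵥ ((Δ * Δᵀ) *ᵥ v) - v ⬝ᵥ ((D0 * D0ᵀ) *ᵥ v) := by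
      have := hD0.dotProduct_mulVec_nonneg v
      rw [star_trivial, sub_mulVec, dotProduct_sub] at this
      exact this
    have hΩv : 0 ≤ v ⬝ᵥ (Ω *ᵥ v) := by
      have := hΩ.posSemidef.dotProduct_mulVec_nonneg v
      rwa [star_trivial] at this
    rw [star_trivial]
    have hgoal : v ⬝ᵥ ((-((X1 - D0) * Y + ((X1 - D0) * Y)ᵀ)) *ᵥ v)
        = -(2 * (v ⬝ᵥ ((X1 * Y) *ᵥ v) - v ⬝ᵥ ((D0 * Y) *ᵥ v))) := by
      rw [neg_mulVec, dotProduct_neg, add_mulVec, dotProduct_add, quad_transpose ((X1 - D0) * Y) v,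
        Matrix.sub_mul, sub_mulVec, dotProduct_sub]
      ring
    rw [hgoal]
    have hεΔ : 0 ≤ ε * (v ⬝ᵥ ((Δ * Δᵀ) *ᵥ v) - v ⬝ᵥ ((D0 * D0ᵀ) *ᵥ v)) :=
      mul_nonneg hε.le hΔv
    have hεbb : ε * (v ⬝ᵥ ((D0 * D0ᵀ) *ᵥ v)) = ε * (b ⬝ᵥ b) := by rw [hbb]
    linarith [h, hq1t, hYb, hq2, hΩv, hεΔ, hεbb]

lemma youngB {CP α Cc xn D : ℝ} (hCcα : Cc * α = 2 * CP ^ 2) :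
    (2 * CP * xn * D) * α ≤ ((α / 2) * xn ^ 2 + Cc * D ^ 2) * α := by
  nlinarith [sq_nonneg (α * xn - 2 * CP * D), sq_nonneg D]
theorem stmt_12 (n m T s : ℕ)
    (A : Matrix (Fin n) (Fin n) ℝ) (B : Matrix (Fin n) (Fin m) ℝ)
    (U0 : Matrix (Fin m) (Fin T) ℝ) (X0 X1 D0 : Matrix (Fin n) (Fin T) ℝ)
    (Δ : Matrix (Fin n) (Fin s) ℝ)
    (Ω : Matrix (Fin n) (Fin n) ℝ) (hΩ : Ω.PosDef)
    (hdata : X1 = A * X0 + B * U0 + D0)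
    (hD0 : (Δ * Δᵀ - D0 * D0ᵀ).PosSemidef)
    (ε : ℝ) (hε : 0 < ε) (Y : Matrix (Fin T) (Fin n) ℝ)
    (hLMI : (-(Matrix.fromBlocks
        (X1 * Y + (X1 * Y)ᵀ + Ω + ε • (Δ * Δᵀ)) Yᵀ Y
        (-(ε • (1 : Matrix (Fin T) (Fin T) ℝ))))).PosDef)
    (hX0Y : (X0 * Y).PosDef)
    (K : Matrix (Fin m) (Fin n) ℝ) (hKdef : K = U0 * Y * (X0 * Y)⁻¹) :
    ∃ c₁ c₂ c₃ : ℝ, 1 ≤ c₁ ∧ 0 < c₂ ∧ 0 < c₃ ∧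
      ∀ d x : ℝ → EuclideanSpace ℝ (Fin n),
        ContinuousOn d (Set.Ici 0) →
        (∃ Cd : ℝ, ∀ t ∈ Set.Ici (0 : ℝ), ‖d t‖ ≤ Cd) →
        (∀ t ∈ Set.Ici (0 : ℝ),
          HasDerivWithinAt x
            ((EuclideanSpace.equiv (Fin n) ℝ).symm ((A + B * K).mulVec (x t)) + d t)
            (Set.Ici 0) t) →
        ∀ t ∈ Set.Ici (0 : ℝ),
          ‖x t‖ ≤ c₁ * Real.exp (-c₂ * t) * ‖x 0‖ +
            c₃ * sSup ((fun u => ‖d u‖) '' Set.Icc 0 t) := by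
  rcases Nat.eq_zero_or_pos n with hn0 | hn
  · subst hn0
    refine ⟨1, 1, 1, le_rfl, one_pos, one_pos, ?_⟩
    intro d x _ hdb _ t ht
    obtain ⟨Cd, hCd⟩ := hdb
    simp only [mem_Ici] at ht
    have hxt : ‖x t‖ = 0 := by
      rw [Subsingleton.elim (x t) 0, norm_zero]
    have hbdd : BddAbove ((fun u => ‖d u‖) '' Icc 0 t) := by
      refine ⟨Cd, ?_⟩
      rintro _ ⟨u, hu, rfl⟩
      exact hCd u hu.1
    have hD : 0 ≤ sSup ((fun u => ‖d u‖) '' Icc 0 t) :=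
      le_trans (norm_nonneg (d 0)) (le_csSup hbdd ⟨0, ⟨le_rfl, ht⟩, rfl⟩)
    have hx0 : ‖x 0‖ = 0 := by rw [Subsingleton.elim (x 0) 0, norm_zero]
    rw [hxt, hx0]
    nlinarith [hD, Real.exp_pos (-1 * t)]
  -- main case
  have hQ := hX0Y
  have hQt : (X0 * Y)ᵀ = X0 * Y := hQ.1
  have hQdet : IsUnit (X0 * Y).det := hQ.det_pos.ne'.isUnit
  set P : Matrix (Fin n) (Fin n) ℝ := (X0 * Y)⁻¹ with hPdef
  have hPQ : P * (X0 * Y) = 1 := nonsing_inv_mul _ hQdet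
  have hQP : (X0 * Y) * P = 1 := mul_nonsing_inv _ hQdet
  have hP : P.PosDef := hQ.inv
  have hPt : Pᵀ = P := hP.1
  have hFQ : (A + B * K) * (X0 * Y) = (X1 - D0) * Y := by
    have hK : K * (X0 * Y) = U0 * Y := by
      rw [hKdef, Matrix.mul_assoc (U0 * Y) P (X0 * Y), hPQ, Matrix.mul_one]
    have hXD : X1 - D0 = A * X0 + B * U0 := by rw [hdata]; abel
    rw [Matrix.add_mul, Matrix.mul_assoc B K _, hK, hXD, Matrix.add_mul,
      Matrix.mul_assoc, Matrix.mul_assoc]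
  have hM2 : (-((X1 - D0) * Y + ((X1 - D0) * Y)ᵀ)).PosDef :=
    step2 X1 D0 Δ Ω hΩ hD0 ε hε Y hLMI
  set S : Matrix (Fin n) (Fin n) ℝ := P * (-((X1 - D0) * Y + ((X1 - D0) * Y)ᵀ)) * P with hSdef
  have hS : S.PosDef := congr_posdef hP hM2
  have hSid : S = -(P * (A + B * K) + (A + B * K)ᵀ * P) := by
    rw [hSdef, ← hFQ, show ((A + B * K) * (X0 * Y))ᵀ = (X0 * Y) * (A + B * K)ᵀ from by
      rw [transpose_mul, hQt]]
    have e1 : P * ((A + B * K) * (X0 * Y)) * P = P * (A + B * K) := by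
      rw [← Matrix.mul_assoc P (A + B * K) (X0 * Y), Matrix.mul_assoc (P * (A + B * K)) _ _,
        hQP, Matrix.mul_one]
    have e2 : P * ((X0 * Y) * (A + B * K)ᵀ) * P = (A + B * K)ᵀ * P := by
      rw [← Matrix.mul_assoc P (X0 * Y) _, hPQ, Matrix.one_mul]
    rw [Matrix.mul_neg, Matrix.neg_mul, Matrix.mul_add, Matrix.add_mul, e1, e2]
  -- quantitative bounds
  obtain ⟨m1, hm1, hm1le⟩ := quad_lower hn P hP
  obtain ⟨α, hα, hαle⟩ := quad_lower hn S hS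
  set Pc : EuclideanSpace ℝ (Fin n) →L[ℝ] EuclideanSpace ℝ (Fin n) :=
    Matrix.toEuclideanCLM (𝕜 := ℝ) P with hPcdef
  have hPc : ∀ w : EuclideanSpace ℝ (Fin n), Pc w = P *ᵥ w := fun _ => rfl
  have hInner : ∀ v w : EuclideanSpace ℝ (Fin n), ⟪v, w⟫ = v ⬝ᵥ w := by
    intro v w
    simp [PiLp.inner_apply, dotProduct, mul_comm]
  set CP : ℝ := ‖Pc‖ + 1 with hCPdef
  have hCP : 0 < CP := by
    rw [hCPdef]
    linarith [norm_nonneg Pc]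
  have hPcb : ∀ w : EuclideanSpace ℝ (Fin n), ‖Pc w‖ ≤ CP * ‖w‖ := by
    intro w
    refine le_trans (Pc.le_opNorm w) ?_
    exact mul_le_mul_of_nonneg_right (by rw [hCPdef]; linarith) (norm_nonneg w)
  have hupper : ∀ v : EuclideanSpace ℝ (Fin n), v ⬝ᵥ (P *ᵥ v) ≤ CP * ‖v‖ ^ 2 := by
    intro v
    have h1 : v ⬝ᵥ (P *ᵥ v) = ⟪v, Pc v⟫ := by rw [hInner, hPc]
    rw [h1]
    calc ⟪v, Pc v⟫ ≤ ‖v‖ * ‖Pc v‖ := real_inner_le_norm _ _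
      _ ≤ ‖v‖ * (CP * ‖v‖) := mul_le_mul_of_nonneg_left (hPcb v) (norm_nonneg v)
      _ = CP * ‖v‖ ^ 2 := by ring
  set β : ℝ := α / (2 * CP) with hβdef
  have hβ : 0 < β := by positivity
  set Cc : ℝ := 2 * CP ^ 2 / α with hCcdef
  have hCc : 0 < Cc := by positivity
  have hβCP : β * CP = α / 2 := by
    rw [hβdef, div_mul_eq_mul_div, div_eq_div_iff (by positivity) two_ne_zero]
    ring
  have hCcα : Cc * α = 2 * CP ^ 2 := by
    rw [hCcdef, div_mul_cancel₀ _ hα.ne']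
  clear_value P S Pc CP β Cc
  refine ⟨max 1 (Real.sqrt (CP / m1)), β / 2, Real.sqrt (Cc / (β * m1)),
    le_max_left _ _, by positivity, Real.sqrt_pos.mpr (by positivity), ?_⟩
  intro d x hdc hdb hx t ht
  obtain ⟨Cd, hCd⟩ := hdb
  simp only [mem_Ici] at ht
  set D : ℝ := sSup ((fun u => ‖d u‖) '' Icc 0 t) with hDdef
  have hbdd : BddAbove ((fun u => ‖d u‖) '' Icc 0 t) := by
    refine ⟨Cd, ?_⟩
    rintro _ ⟨u, hu, rfl⟩
    exact hCd u hu.1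
  have hDle : ∀ u ∈ Icc (0:ℝ) t, ‖d u‖ ≤ D := fun u hu => le_csSup hbdd ⟨u, hu, rfl⟩
  have hDnn : 0 ≤ D := le_trans (norm_nonneg (d 0)) (hDle 0 ⟨le_rfl, ht⟩)
  set V : ℝ → ℝ := fun τ => ⟪x τ, Pc (x τ)⟫ with hVdef
  set V' : ℝ → ℝ := fun τ =>
    ⟪x τ, Pc ((EuclideanSpace.equiv (Fin n) ℝ).symm ((A + B * K).mulVec (x τ)) + d τ)⟫ +
    ⟪(EuclideanSpace.equiv (Fin n) ℝ).symm ((A + B * K).mulVec (x τ)) + d τ, Pc (x τ)⟫ with hV'def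
  have hVd : ∀ τ ∈ Ici (0:ℝ), HasDerivWithinAt V (V' τ) (Ici 0) τ := by
    intro τ hτ
    have h1 := hx τ hτ
    have h2 := Pc.hasFDerivAt.comp_hasDerivWithinAt τ h1
    exact HasDerivWithinAt.inner ℝ h1 h2
  have hxc : ContinuousOn x (Ici 0) := fun τ hτ => (hx τ hτ).continuousWithinAt
  have hVc : ContinuousOn V (Icc 0 t) := by
    have h1 : ContinuousOn x (Icc 0 t) := hxc.mono (fun τ hτ => hτ.1)
    exact ContinuousOn.inner h1 (Pc.continuous.comp_continuousOn h1)
  have hVeq : ∀ τ, V τ = (x τ) ⬝ᵥ (P *ᵥ (x τ)) := by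
    intro τ
    show ⟪x τ, Pc (x τ)⟫ = _
    rw [hInner, hPc]
  have hsym : ∀ a c : EuclideanSpace ℝ (Fin n), a ⬝ᵥ (P *ᵥ c) = c ⬝ᵥ (P *ᵥ a) := by
    intro a c
    rw [dotProduct_mulVec, ← mulVec_transpose, hPt, dotProduct_comm]
  have hV'eq : ∀ τ, V' τ =
      ⟪x τ, Pc ((EuclideanSpace.equiv (Fin n) ℝ).symm ((A + B * K).mulVec (x τ)) + d τ)⟫ +
      ⟪(EuclideanSpace.equiv (Fin n) ℝ).symm ((A + B * K).mulVec (x τ)) + d τ, Pc (x τ)⟫ :=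
    fun _ => rfl
  clear_value D V V'
  have hbound : ∀ τ ∈ Ico (0:ℝ) t, V' τ ≤ (-β) * V τ + Cc * D ^ 2 := by
    intro τ hτ
    have hWτ : P *ᵥ ((EuclideanSpace.equiv (Fin n) ℝ).symm ((A + B * K).mulVec (x τ)) + d τ)
        = P *ᵥ ((A + B * K) *ᵥ (x τ)) + P *ᵥ (d τ) := by
      funext i
      simp only [mulVec, dotProduct, PiLp.continuousLinearEquiv_symm_apply,
        WithLp.linearEquiv_symm_apply, WithLp.ofLp_toLp, WithLp.ofLp_add,
        PiLp.add_apply, Pi.add_apply, mul_add, Finset.sum_add_distrib]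
    have h1 : V' τ = 2 * ((x τ) ⬝ᵥ (P *ᵥ ((A + B * K) *ᵥ (x τ))))
        + 2 * ((x τ) ⬝ᵥ (P *ᵥ (d τ))) := by
      rw [hV'eq τ, hInner, hInner, hPc, hPc, hsym ((EuclideanSpace.equiv (Fin n) ℝ).symm ((A + B * K).mulVec (x τ)) + d τ) (x τ), WithLp.ofLp_add, hWτ, dotProduct_add]
      ring
    have h2 : 2 * ((x τ) ⬝ᵥ (P *ᵥ ((A + B * K) *ᵥ (x τ)))) = -((x τ) ⬝ᵥ (S *ᵥ (x τ))) := by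
      rw [hSid, neg_mulVec, dotProduct_neg, neg_neg]
      conv_rhs => rw [add_mulVec, dotProduct_add,
        show (A + B * K)ᵀ * P = (P * (A + B * K))ᵀ from by rw [transpose_mul, hPt],
        quad_transpose, ← mulVec_mulVec]
      ring
    have h3 : α * ‖x τ‖ ^ 2 ≤ (x τ) ⬝ᵥ (S *ᵥ (x τ)) := hαle (x τ)
    have h4 : (x τ) ⬝ᵥ (P *ᵥ (d τ)) ≤ CP * ‖x τ‖ * ‖d τ‖ := by
      have hi := real_inner_le_norm (x τ) (Pc (d τ))
      have hpb := hPcb (d τ)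
      rw [hInner, hPc] at hi
      refine le_trans hi (le_trans (mul_le_mul_of_nonneg_left hpb (norm_nonneg _))
        (le_of_eq (by ring)))
    have h5 : ‖d τ‖ ≤ D := hDle τ ⟨hτ.1, hτ.2.le⟩
    have h6 : V τ ≤ CP * ‖x τ‖ ^ 2 := by rw [hVeq]; exact hupper (x τ)
    have hprod : 0 ≤ CP * ‖x τ‖ * (D - ‖d τ‖) :=
      mul_nonneg (mul_nonneg hCP.le (norm_nonneg _)) (sub_nonneg.mpr h5)
    have hA' : 2 * ((x τ) ⬝ᵥ (P *ᵥ (d τ))) ≤ 2 * CP * ‖x τ‖ * D := by linarith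
    have hB' : (2 * CP * ‖x τ‖ * D) * α ≤ ((α / 2) * ‖x τ‖ ^ 2 + Cc * D ^ 2) * α :=
      youngB hCcα
    have hC' : 2 * CP * ‖x τ‖ * D ≤ (α / 2) * ‖x τ‖ ^ 2 + Cc * D ^ 2 :=
      le_of_mul_le_mul_right hB' hα
    have hD1 : β * V τ ≤ β * (CP * ‖x τ‖ ^ 2) := mul_le_mul_of_nonneg_left h6 hβ.le
    have hD2 : β * (CP * ‖x τ‖ ^ 2) = (α / 2) * ‖x τ‖ ^ 2 := by
      rw [← mul_assoc, hβCP]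
    rw [h1, h2]
    linarith
  have hKne : (-β) ≠ 0 := neg_ne_zero.mpr hβ.ne'
  have hgr := le_gronwallBound_of_liminf_deriv_right_le (f := V) (f' := V')
    (δ := V 0) (K := -β) (ε := Cc * D ^ 2) (a := 0) (b := t) hVc
    (fun τ hτ r hr =>
      (((hVd τ hτ.1).mono (Ici_subset_Ici.mpr hτ.1)).liminf_right_slope_le hr))
    le_rfl hbound t ⟨ht, le_rfl⟩
  have hVeq0 : V 0 ≤ CP * ‖x 0‖ ^ 2 := by rw [hVeq]; exact hupper (x 0)
  have hVtl : m1 * ‖x t‖ ^ 2 ≤ V t := by rw [hVeq]; exact hm1le (x t)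
  rw [sub_zero] at hgr
  rw [gronwallBound_of_K_ne_0 hKne] at hgr
  set eT : ℝ := Real.exp (-β * t) with heT
  have hE1 : 0 < eT := Real.exp_pos _
  have hE2 : eT ≤ 1 := by
    rw [heT]
    have h0 : -β * t ≤ 0 := by
      have := mul_nonneg hβ.le ht
      linarith
    have := Real.exp_le_exp.mpr h0
    rwa [Real.exp_zero] at this
  have hq : 0 ≤ Cc * D ^ 2 / β := div_nonneg (mul_nonneg hCc.le (sq_nonneg D)) hβ.le
  have htail : (Cc * D ^ 2) / (-β) * (eT - 1) ≤ (Cc * D ^ 2) / β := by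
    rw [div_neg, neg_mul]
    linarith [mul_nonneg hq hE1.le]
  have hVle : V t ≤ CP * ‖x 0‖ ^ 2 * eT + (Cc * D ^ 2) / β := by
    have h1 : V 0 * eT ≤ CP * ‖x 0‖ ^ 2 * eT := mul_le_mul_of_nonneg_right hVeq0 hE1.le
    linarith [hgr, htail, h1]
  have hfin : m1 * ‖x t‖ ^ 2 ≤ CP * ‖x 0‖ ^ 2 * eT + (Cc * D ^ 2) / β := le_trans hVtl hVle
  have hstep : ‖x t‖ ^ 2 ≤ (CP / m1) * eT * ‖x 0‖ ^ 2 + (Cc / (β * m1)) * D ^ 2 := by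
    rw [show (CP / m1) * eT * ‖x 0‖ ^ 2 + (Cc / (β * m1)) * D ^ 2
        = (CP * ‖x 0‖ ^ 2 * eT + (Cc * D ^ 2) / β) / m1 from by field_simp]
    rw [le_div_iff₀ hm1]
    linarith [hfin]
  have hnn1 : (0:ℝ) ≤ CP / m1 := div_nonneg hCP.le hm1.le
  have hnn2 : (0:ℝ) ≤ Cc / (β * m1) := div_nonneg hCc.le (mul_nonneg hβ.le hm1.le)
  have hxt2 : ‖x t‖ ≤ Real.sqrt ((CP / m1) * eT * ‖x 0‖ ^ 2)
      + Real.sqrt ((Cc / (β * m1)) * D ^ 2) := by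
    rw [← Real.sqrt_sq (norm_nonneg (x t))]
    exact le_trans (Real.sqrt_le_sqrt hstep)
      (sqrt_add_le' (mul_nonneg (mul_nonneg hnn1 hE1.le) (sq_nonneg _))
        (mul_nonneg hnn2 (sq_nonneg _)))
  have hs1 : Real.sqrt ((CP / m1) * eT * ‖x 0‖ ^ 2)
      = Real.sqrt (CP / m1) * Real.sqrt eT * ‖x 0‖ := by
    rw [Real.sqrt_mul (mul_nonneg hnn1 hE1.le) (‖x 0‖ ^ 2),
      Real.sqrt_mul hnn1 eT, Real.sqrt_sq (norm_nonneg _)]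
  have hs2 : Real.sqrt eT = Real.exp (-(β / 2) * t) := by
    rw [heT, show -β * t = (-(β / 2) * t) + (-(β / 2) * t) from by ring, Real.exp_add,
      Real.sqrt_mul_self (Real.exp_nonneg _)]
  have hs3 : Real.sqrt ((Cc / (β * m1)) * D ^ 2) = Real.sqrt (Cc / (β * m1)) * D := by
    rw [Real.sqrt_mul hnn2 (D ^ 2), Real.sqrt_sq hDnn]
  rw [hs1, hs2, hs3] at hxt2
  refine le_trans hxt2 ?_
  refine add_le_add ?_ le_rfl
  exact mul_le_mul_of_nonneg_right
    (mul_le_mul_of_nonneg_right (le_max_right 1 (Real.sqrt (CP / m1))) (Real.exp_nonneg _))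
    (norm_nonneg _)
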